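/- Under the sign restriction and continuity assumptions, the set Θ = {b ∈ Γ : G(X,c,b)·E(H(Y,c)|X) ≥ 0 a.s. for all c ∈ C} equals the set Θ̃ = {b ∈ Γ : G(X,c,b)·E(H(Y,c) | G(X,c,b), G(X,c,γ)) ≥ 0 a.s. for all (γ,c) ∈ Γ × C}, where the inner conditional expectation is conditional on the two indexing variables G(X,c,b) and G(X,c,γ). -/

import Mathlib

open MeasureTheory ProbabilityTheory

lemma sign_pos_of_eq_one {x : ℝ} (h : Real.sign x = 1) : 0 < x := by
  rcases lt_trichotomy x 0 with h' | h' | h'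
  · rw [Real.sign_of_neg h'] at h; norm_num at h
  · rw [h', Real.sign_zero] at h; norm_num at h
  · exact h'

lemma sign_neg_of_eq_neg_one {x : ℝ} (h : Real.sign x = -1) : x < 0 := by
  rcases lt_trichotomy x 0 with h' | h' | h'
  · exact h'
  · rw [h', Real.sign_zero] at h; norm_num at h
  · rw [Real.sign_of_pos h'] at h; norm_num at h

lemma mul_nonneg_of_nonpos_nonpos' {a b : ℝ} (ha : a ≤ 0) (hb : b ≤ 0) : 0 ≤ a * b := by nlinarith

lemma nonneg_right_of_mul {a b : ℝ} (h : 0 ≤ a * b) (ha : 0 < a) : 0 ≤ b := by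
  by_contra hb
  push_neg at hb
  nlinarith

lemma nonpos_right_of_mul {a b : ℝ} (h : 0 ≤ a * b) (ha : a < 0) : b ≤ 0 := by
  by_contra hb
  push_neg at hb
  nlinarith

lemma condExp_nonneg_on {Ω : Type*} {m m0 : MeasurableSpace Ω} (hm : m ≤ m0)
    (μ : Measure Ω) [IsFiniteMeasure μ] {f : Ω → ℝ} (hf : Integrable f μ)
    {A : Set Ω} (hA : MeasurableSet[m] A)
    (h : ∀ᵐ ω ∂μ, ω ∈ A → 0 ≤ f ω) : ∀ᵐ ω ∂μ, ω ∈ A → 0 ≤ (μ[f|m]) ω := by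
  have h1 := condExp_indicator (m := m) hf hA
  have h2 : 0 ≤ᵐ[μ] μ[A.indicator f|m] := by
    refine condExp_nonneg ?_
    filter_upwards [h] with ω hω
    exact Set.indicator_apply_nonneg hω
  filter_upwards [h1, h2] with ω e1 le1 hωA
  have : 0 ≤ A.indicator (μ[f|m]) ω := e1 ▸ le1
  rwa [Set.indicator_of_mem hωA] at this

lemma measure_null_of_condExp_nonpos {Ω : Type*} {m m0 : MeasurableSpace Ω} (hm : m ≤ m0)
    (μ : Measure Ω) [IsProbabilityMeasure μ] {f : Ω → ℝ} (hf : Integrable f μ)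
    {A : Set Ω} (hA : MeasurableSet[m] A)
    (hpos : ∀ᵐ ω ∂μ, ω ∈ A → 0 < f ω)
    (hneg : ∀ᵐ ω ∂μ, ω ∈ A → (μ[f|m]) ω ≤ 0) : μ A = 0 := by
  have hA0 : MeasurableSet A := hm _ hA
  have hge := condExp_nonneg_on hm μ hf hA (hpos.mono fun ω h hω => (h hω).le)
  have h0 : ∀ᵐ ω ∂μ, ω ∈ A → (μ[f|m]) ω = 0 := by
    filter_upwards [hge, hneg] with ω h1 h2 hω
    exact le_antisymm (h2 hω) (h1 hω)
  have hint : ∫ ω in A, (μ[f|m]) ω ∂μ = ∫ ω in A, f ω ∂μ := setIntegral_condExp hm hf hA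
  have hL : ∫ ω in A, (μ[f|m]) ω ∂μ = 0 := by
    refine integral_eq_zero_of_ae ?_
    exact (ae_restrict_iff' hA0).mpr h0
  have hfr : Integrable f (μ.restrict A) := hf.restrict
  have hge' : 0 ≤ᵐ[μ.restrict A] f :=
    (ae_restrict_iff' hA0).mpr (hpos.mono fun ω h hω => (h hω).le)
  have hfz : f =ᵐ[μ.restrict A] 0 :=
    (integral_eq_zero_iff_of_nonneg_ae hge' hfr).mp (hint ▸ hL)
  have hfalse : ∀ᵐ ω ∂μ.restrict A, False := by
    filter_upwards [hfz, (ae_restrict_iff' hA0).mpr hpos] with ω hz hp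
    exact absurd hz (ne_of_gt hp)
  have : μ.restrict A = 0 := ae_eq_bot.mp (Filter.eventually_false_iff_eq_bot.mp hfalse)
  exact Measure.restrict_eq_zero.mp this

/-- Conditional expectation of `f` given the σ-algebra generated by the random element `X`. -/
noncomputable def condExpGiven {Ω 𝓧 : Type*} [MeasurableSpace Ω] [MeasurableSpace 𝓧]
    (μ : Measure Ω) (X : Ω → 𝓧) (f : Ω → ℝ) : Ω → ℝ :=
  μ[f | MeasurableSpace.comap X inferInstance]

/-- Under the sign restriction and continuity assumptions, the identified set
`Θ` (conditioning on the full covariate vector `X`) equals the dimension-reduced set `Θ̃`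
(conditioning on the two indexing variables `G(X,c,b)` and `G(X,c,γ)`). -/
theorem theta_eq_theta_tilde {Ω 𝓧 𝓨 P C' : Type*}
    [MeasurableSpace Ω] [MeasurableSpace 𝓧] [MeasurableSpace 𝓨]
    (μ : Measure Ω) [IsProbabilityMeasure μ]
    (X : Ω → 𝓧) (Y : Ω → 𝓨) (hX : Measurable X) (hY : Measurable Y)
    (Γ : Set P) (C : Set C') (β : P) (hβ : β ∈ Γ)
    (G : 𝓧 → C' → P → ℝ) (H : 𝓨 → C' → ℝ)
    (hG : ∀ c b, Measurable fun x => G x c b)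
    (hH : ∀ c, Measurable fun y => H y c)
    (hHint : ∀ c, Integrable (fun ω => H (Y ω) c) μ)
    -- Assumption 1 (sign restriction) for the true parameter β
    (hsign : ∀ c ∈ C, ∀ᵐ ω ∂μ,
      Real.sign (G (X ω) c β) =
        Real.sign (condExpGiven μ X (fun ω' => H (Y ω') c) ω))
    -- Assumption 2 (continuity)
    (hcont : ∀ b ∈ Γ, ∀ c ∈ C, μ {ω | G (X ω) c b = 0} = 0) :
    {b ∈ Γ | ∀ c ∈ C, ∀ᵐ ω ∂μ,
      G (X ω) c b * condExpGiven μ X (fun ω' => H (Y ω') c) ω ≥ 0} =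
    {b ∈ Γ | ∀ γ ∈ Γ, ∀ c ∈ C, ∀ᵐ ω ∂μ,
      G (X ω) c b *
        condExpGiven μ (fun ω' => (G (X ω') c b, G (X ω') c γ))
          (fun ω' => H (Y ω') c) ω ≥ 0} := by
  have hmX : MeasurableSpace.comap X inferInstance ≤ ‹MeasurableSpace Ω› :=
    measurable_iff_comap_le.mp hX
  ext b
  simp only [Set.mem_setOf_eq]
  constructor
  · rintro ⟨hbΓ, hb⟩
    refine ⟨hbΓ, fun γ hγ c hc => ?_⟩
    set f : Ω → ℝ := fun ω => H (Y ω) c with hf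
    set Z : Ω → ℝ × ℝ := fun ω => (G (X ω) c b, G (X ω) c γ) with hZ
    have hZmeas : Measurable Z := Measurable.prodMk ((hG c b).comp hX) ((hG c γ).comp hX)
    have hmm0 : MeasurableSpace.comap Z inferInstance ≤ ‹MeasurableSpace Ω› :=
      measurable_iff_comap_le.mp hZmeas
    have hle : MeasurableSpace.comap Z inferInstance ≤
        MeasurableSpace.comap X inferInstance := by
      rw [show Z = (fun x : 𝓧 => (G x c b, G x c γ)) ∘ X from rfl,
        ← MeasurableSpace.comap_comp]
      exact MeasurableSpace.comap_mono
        (measurable_iff_comap_le.mp (((hG c b)).prodMk (hG c γ)))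
    have hA : MeasurableSet[MeasurableSpace.comap Z inferInstance]
        {ω | 0 < G (X ω) c b} :=
      MeasurableSpace.measurableSet_comap.mpr
        ⟨{p : ℝ × ℝ | 0 < p.1}, measurableSet_lt measurable_const measurable_fst, rfl⟩
    have hB : MeasurableSet[MeasurableSpace.comap Z inferInstance]
        {ω | G (X ω) c b < 0} :=
      MeasurableSpace.measurableSet_comap.mpr
        ⟨{p : ℝ × ℝ | p.1 < 0}, measurableSet_lt measurable_fst measurable_const, rfl⟩
    have hgA : ∀ᵐ ω ∂μ, ω ∈ {ω | 0 < G (X ω) c b} → 0 ≤ condExpGiven μ X f ω := by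
      filter_upwards [hb c hc] with ω h hω
      exact nonneg_right_of_mul h hω
    have hgB : ∀ᵐ ω ∂μ, ω ∈ {ω | G (X ω) c b < 0} →
        0 ≤ (-(condExpGiven μ X f)) ω := by
      filter_upwards [hb c hc] with ω h hω
      simp only [Pi.neg_apply, neg_nonneg]
      exact nonpos_right_of_mul h hω
    have hgint : Integrable (condExpGiven μ X f) μ := integrable_condExp
    have h1 := condExp_nonneg_on hmm0 μ hgint hA hgA
    have h2 := condExp_nonneg_on hmm0 μ hgint.neg hB hgB
    have htower : μ[condExpGiven μ X f|MeasurableSpace.comap Z inferInstance]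
        =ᵐ[μ] μ[f|MeasurableSpace.comap Z inferInstance] :=
      condExp_condExp_of_le hle hmX
    have hneg : μ[-(condExpGiven μ X f)|MeasurableSpace.comap Z inferInstance]
        =ᵐ[μ] -μ[condExpGiven μ X f|MeasurableSpace.comap Z inferInstance] :=
      condExp_neg _ _
    show ∀ᵐ ω ∂μ, G (X ω) c b *
      (μ[f|MeasurableSpace.comap Z inferInstance]) ω ≥ 0
    filter_upwards [h1, h2, htower, hneg] with ω h1ω h2ω htω hnω
    rcases lt_trichotomy (G (X ω) c b) 0 with h' | h' | h'
    · have h3 : 0 ≤ (-(μ[condExpGiven μ X f|MeasurableSpace.comap Z inferInstance])) ω :=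
        hnω ▸ h2ω h'
      simp only [Pi.neg_apply, neg_nonneg] at h3
      rw [← htω]
      exact mul_nonneg_of_nonpos_nonpos' h'.le h3
    · simp [h']
    · rw [← htω]
      exact mul_nonneg h'.le (h1ω h')
  · rintro ⟨hbΓ, hb⟩
    refine ⟨hbΓ, fun c hc => ?_⟩
    set f : Ω → ℝ := fun ω => H (Y ω) c with hf
    set Z : Ω → ℝ × ℝ := fun ω => (G (X ω) c b, G (X ω) c β) with hZ
    have hZmeas : Measurable Z := Measurable.prodMk ((hG c b).comp hX) ((hG c β).comp hX)
    have hmm0 : MeasurableSpace.comap Z inferInstance ≤ ‹MeasurableSpace Ω› :=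
      measurable_iff_comap_le.mp hZmeas
    have hle : MeasurableSpace.comap Z inferInstance ≤
        MeasurableSpace.comap X inferInstance := by
      rw [show Z = (fun x : 𝓧 => (G x c b, G x c β)) ∘ X from rfl,
        ← MeasurableSpace.comap_comp]
      exact MeasurableSpace.comap_mono
        (measurable_iff_comap_le.mp (((hG c b)).prodMk (hG c β)))
    have hbβ : ∀ᵐ ω ∂μ, G (X ω) c b *
        (μ[f|MeasurableSpace.comap Z inferInstance]) ω ≥ 0 := hb β hβ c hc
    have htower : μ[condExpGiven μ X f|MeasurableSpace.comap Z inferInstance]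
        =ᵐ[μ] μ[f|MeasurableSpace.comap Z inferInstance] :=
      condExp_condExp_of_le hle hmX
    have hneg : μ[-(condExpGiven μ X f)|MeasurableSpace.comap Z inferInstance]
        =ᵐ[μ] -μ[condExpGiven μ X f|MeasurableSpace.comap Z inferInstance] :=
      condExp_neg _ _
    have hTp : MeasurableSet[MeasurableSpace.comap Z inferInstance]
        {ω | 0 < G (X ω) c β ∧ G (X ω) c b < 0} :=
      MeasurableSpace.measurableSet_comap.mpr
        ⟨{p : ℝ × ℝ | 0 < p.2 ∧ p.1 < 0},
          (measurableSet_lt measurable_const measurable_snd).inter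
            (measurableSet_lt measurable_fst measurable_const), rfl⟩
    have hTm : MeasurableSet[MeasurableSpace.comap Z inferInstance]
        {ω | G (X ω) c β < 0 ∧ 0 < G (X ω) c b} :=
      MeasurableSpace.measurableSet_comap.mpr
        ⟨{p : ℝ × ℝ | p.2 < 0 ∧ 0 < p.1},
          (measurableSet_lt measurable_snd measurable_const).inter
            (measurableSet_lt measurable_const measurable_fst), rfl⟩
    have hgint : Integrable (condExpGiven μ X f) μ := integrable_condExp
    have hTp0 : μ {ω | 0 < G (X ω) c β ∧ G (X ω) c b < 0} = 0 := by
      refine measure_null_of_condExp_nonpos hmm0 μ hgint hTp ?_ ?_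
      · filter_upwards [hsign c hc] with ω hs hω
        exact sign_pos_of_eq_one (hs ▸ Real.sign_of_pos hω.1)
      · filter_upwards [hbβ, htower] with ω h ht hω
        rw [ht]
        exact nonpos_right_of_mul h hω.2
    have hTm0 : μ {ω | G (X ω) c β < 0 ∧ 0 < G (X ω) c b} = 0 := by
      refine measure_null_of_condExp_nonpos hmm0 μ hgint.neg hTm ?_ ?_
      · filter_upwards [hsign c hc] with ω hs hω
        have hsg := sign_neg_of_eq_neg_one (hs ▸ Real.sign_of_neg hω.1)
        simpa using hsg
      · filter_upwards [hbβ, htower, hneg] with ω h ht hn hω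
        rw [hn]
        simp only [Pi.neg_apply, neg_nonpos]
        rw [ht]
        exact nonneg_right_of_mul h hω.2
    have hS0 : μ {ω | G (X ω) c β = 0} = 0 := hcont β hβ c hc
    show ∀ᵐ ω ∂μ, G (X ω) c b * condExpGiven μ X f ω ≥ 0
    filter_upwards [hsign c hc, measure_eq_zero_iff_ae_notMem.mp hTp0,
      measure_eq_zero_iff_ae_notMem.mp hTm0, measure_eq_zero_iff_ae_notMem.mp hS0]
      with ω hs hntp hntm hn0
    rcases lt_trichotomy (G (X ω) c β) 0 with h' | h' | h'
    · have hgneg := sign_neg_of_eq_neg_one (hs ▸ Real.sign_of_neg h')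
      have hble : G (X ω) c b ≤ 0 := by
        by_contra hpos
        exact hntm ⟨h', lt_of_not_ge hpos⟩
      exact mul_nonneg_of_nonpos_nonpos' hble hgneg.le
    · exact absurd h' hn0
    · have hgpos := sign_pos_of_eq_one (hs ▸ Real.sign_of_pos h')
      have hble : 0 ≤ G (X ω) c b := by
        by_contra hneg'
        exact hntp ⟨h', lt_of_not_ge hneg'⟩
      exact mul_nonneg hble hgpos.le
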